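/- For all natural numbers n and positive integers k, the sum ∑_{ℓ=0}^{n} ∑_{m=0}^{n-ℓ} C(n,ℓ) · s₁(n-ℓ, m) · B_m^{(ℓ)} · E_ℓ^{(k)} equals Ch_n^{(k)}, expressing higher-order Changhee numbers through higher-order Bernoulli and Euler numbers. -/

import Mathlib

open Finset

/-- Signed Stirling numbers of the first kind. -/
def s1 : ℕ → ℕ → ℚ
  | 0, 0 => 1
  | 0, _ + 1 => 0
  | n + 1, 0 => -(n : ℚ) * s1 n 0
  | n + 1, l + 1 => s1 n l - (n : ℚ) * s1 n (l + 1)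

/-- Stirling numbers of the second kind. -/
def S2 : ℕ → ℕ → ℚ
  | 0, 0 => 1
  | 0, _ + 1 => 0
  | _ + 1, 0 => 0
  | n + 1, l + 1 => S2 n l + ((l : ℚ) + 1) * S2 n (l + 1)

/-- Order-ℓ Bernoulli numbers, via Stirling inversion of the Daehee numbers. -/
def B (m l : ℕ) : ℚ :=
  ∑ j ∈ range (m + 1), S2 m j * s1 (j + l) l / ((j + l).choose l)

/-- Order-k Euler numbers. -/
def E (k l : ℕ) : ℚ :=
  ∑ j ∈ range (l + 1), (-1/2 : ℚ)^j * ((k + j - 1).choose j) * (j.factorial : ℚ) * S2 l j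

/-- Higher-order Changhee numbers of the first kind. -/
def Ch (k n : ℕ) : ℚ := (-1)^n * n.factorial / 2^n * ((k + n - 1).choose n)

lemma s1_eq_zero : ∀ r m : ℕ, r < m → s1 r m = 0
  | 0, _+1, _ => rfl
  | r+1, m+1, h => by
    have h1 : r < m := Nat.lt_of_succ_lt_succ h
    show s1 r m - (r:ℚ) * s1 r (m+1) = 0
    rw [s1_eq_zero r m h1, s1_eq_zero r (m+1) (h1.trans (Nat.lt_succ_self m))]
    ring

lemma S2_eq_zero : ∀ m j : ℕ, m < j → S2 m j = 0
  | 0, _+1, _ => rfl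
  | m+1, j+1, h => by
    have h1 : m < j := Nat.lt_of_succ_lt_succ h
    show S2 m j + ((j:ℚ)+1) * S2 m (j+1) = 0
    rw [S2_eq_zero m j h1, S2_eq_zero m (j+1) (h1.trans (Nat.lt_succ_self j))]
    ring

lemma stirling_inv : ∀ r j : ℕ, ∑ m ∈ range (r+1), s1 r m * S2 m j = if j = r then 1 else 0
  | 0, j => by cases j <;> simp [s1, S2]
  | r+1, j => by
    have shift : ∑ m ∈ range (r+1), s1 r (m+1) * S2 (m+1) j
        = (∑ m ∈ range (r+1), s1 r m * S2 m j) - s1 r 0 * S2 0 j := by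
      have h := Finset.sum_range_succ' (fun m => s1 r m * S2 m j) r
      rw [Finset.sum_range_succ (fun m => s1 r (m+1) * S2 (m+1) j) r,
        s1_eq_zero r (r+1) (Nat.lt_succ_self r), h]
      ring
    have expand : ∑ m ∈ range (r+2), s1 (r+1) m * S2 m j
        = (∑ m ∈ range (r+1), s1 r m * S2 (m+1) j)
          - (r:ℚ) * ∑ m ∈ range (r+1), s1 r m * S2 m j := by
      rw [Finset.sum_range_succ' (fun m => s1 (r+1) m * S2 m j) (r+1)]
      have e1 : ∀ m, s1 (r+1) (m+1) * S2 (m+1) j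
          = s1 r m * S2 (m+1) j - (r:ℚ) * (s1 r (m+1) * S2 (m+1) j) := by
        intro m
        show (s1 r m - (r:ℚ) * s1 r (m+1)) * S2 (m+1) j = _
        ring
      simp only [e1]
      rw [Finset.sum_sub_distrib, ← Finset.mul_sum, shift,
        show s1 (r+1) 0 = -(r:ℚ) * s1 r 0 from rfl]
      ring
    rw [expand, stirling_inv r j]
    cases j with
    | zero =>
      simp only [show ∀ m:ℕ, S2 (m+1) 0 = 0 from fun m => rfl, mul_zero,
        Finset.sum_const_zero]
      rcases eq_or_ne r 0 with h | h
      · simp [h]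
      · simp [h, Ne.symm h]
    | succ j' =>
      have e : ∀ m, s1 r m * S2 (m+1) (j'+1)
          = s1 r m * S2 m j' + ((j':ℚ)+1) * (s1 r m * S2 m (j'+1)) := by
        intro m
        show s1 r m * (S2 m j' + ((j':ℚ)+1) * S2 m (j'+1)) = _
        ring
      simp only [e]
      rw [Finset.sum_add_distrib, ← Finset.mul_sum, stirling_inv r j',
        stirling_inv r (j'+1)]
      rcases eq_or_ne j' r with h1 | h1
      · have h2 : j' + 1 ≠ r := by omega
        simp [h1, h2]
      · rcases eq_or_ne (j'+1) r with h2 | h2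
        · have h3 : j' + 1 ≠ r + 1 := by omega
          have : ((j':ℚ)+1) = (r:ℚ) := by exact_mod_cast congrArg (Nat.cast (R := ℚ)) h2
          simp [h1, h2, h3, this]
        · have h3 : j' + 1 ≠ r + 1 := by omega
          simp [h1, h2, h3]

theorem changhee_from_bernoulli_euler (n k : ℕ) (hk : 1 ≤ k) :
    ∑ l ∈ range (n + 1), ∑ m ∈ range (n - l + 1),
        (n.choose l : ℚ) * s1 (n - l) m * B m l * E k l = Ch k n := by
  have key1 : ∀ l, l ≤ n → ∑ m ∈ range (n - l + 1), s1 (n-l) m * B m l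
      = s1 n l / ((n.choose l : ℚ)) := by
    intro l hl
    set r := n - l with hr
    have hrl : r + l = n := Nat.sub_add_cancel hl
    calc ∑ m ∈ range (r+1), s1 r m * B m l
        = ∑ m ∈ range (r+1), s1 r m *
            ∑ j ∈ range (r+1), S2 m j * s1 (j+l) l / ((j+l).choose l) := by
          refine Finset.sum_congr rfl fun m hm => ?_
          congr 1
          refine Finset.sum_subset ?_ ?_
          · exact Finset.range_subset_range.mpr (Nat.succ_le_succ (Nat.lt_succ_iff.mp (mem_range.mp hm)))
          · intro j _ hj2
            rw [S2_eq_zero m j (by simpa using hj2), zero_mul, zero_div]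
      _ = ∑ j ∈ range (r+1), (∑ m ∈ range (r+1), s1 r m * S2 m j)
            * (s1 (j+l) l / ((j+l).choose l)) := by
          simp only [Finset.mul_sum]
          rw [Finset.sum_comm]
          refine Finset.sum_congr rfl fun j _ => ?_
          rw [Finset.sum_mul]
          refine Finset.sum_congr rfl fun m _ => ?_
          ring
      _ = s1 (r+l) l / ((r+l).choose l) := by
          simp only [stirling_inv]
          simp only [ite_mul, one_mul, zero_mul]
          simp [Finset.sum_ite_eq' (range (r+1)) r]
      _ = s1 n l / ((n.choose l : ℚ)) := by rw [hrl]
  calc ∑ l ∈ range (n + 1), ∑ m ∈ range (n - l + 1),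
        (n.choose l : ℚ) * s1 (n - l) m * B m l * E k l
      = ∑ l ∈ range (n + 1), s1 n l * E k l := by
        refine Finset.sum_congr rfl fun l hl => ?_
        have hl' : l ≤ n := Nat.lt_succ_iff.mp (mem_range.mp hl)
        have e : ∀ m, (n.choose l : ℚ) * s1 (n-l) m * B m l * E k l
            = ((n.choose l : ℚ) * E k l) * (s1 (n-l) m * B m l) := fun m => by ring
        simp only [e]
        rw [← Finset.mul_sum, key1 l hl']
        have hC : ((n.choose l : ℚ)) ≠ 0 := by
          exact_mod_cast (Nat.choose_pos hl').ne'
        field_simp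
    _ = ∑ l ∈ range (n + 1), s1 n l *
          ∑ j ∈ range (n+1), (-1/2 : ℚ)^j * ((k + j - 1).choose j) * (j.factorial : ℚ) * S2 l j := by
        refine Finset.sum_congr rfl fun l hl => ?_
        congr 1
        refine Finset.sum_subset ?_ ?_
        · exact Finset.range_subset_range.mpr (Nat.succ_le_succ (Nat.lt_succ_iff.mp (mem_range.mp hl)))
        · intro j _ hj2
          rw [S2_eq_zero l j (by simpa using hj2), mul_zero]
    _ = ∑ j ∈ range (n+1), (∑ l ∈ range (n+1), s1 n l * S2 l j)
          * ((-1/2 : ℚ)^j * ((k + j - 1).choose j) * (j.factorial : ℚ)) := by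
        simp only [Finset.mul_sum]
        rw [Finset.sum_comm]
        refine Finset.sum_congr rfl fun j _ => ?_
        rw [Finset.sum_mul]
        refine Finset.sum_congr rfl fun l _ => ?_
        ring
    _ = (-1/2 : ℚ)^n * ((k + n - 1).choose n) * (n.factorial : ℚ) := by
        simp only [stirling_inv]
        simp only [ite_mul, one_mul, zero_mul]
        simp [Finset.sum_ite_eq' (range (n+1)) n]
    _ = Ch k n := by
        unfold Ch
        rw [div_pow]
        ring
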